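/- In type A₃ (W = S₄), the element x = s₂s₁s₃ satisfies: V_x^π = {(a,−a,−a,a) : a ∈ ℝ}, V_x^{π/2} = {(a,b,−b,−a) : a,b ∈ ℝ}, and V = V_x^{π/2} ⊕ V_x^π; moreover x is at good position with respect to the sequence (π/2, π) but not with respect to (π, π/2). -/

import Mathlib

open Pointwise

/-- `V_x^θ` inside the reflection representation (sum-zero vectors of `ℝ⁴`)
for a permutation `x ∈ S₄` acting by permuting coordinates. -/
noncomputable def Vth (x : Equiv.Perm (Fin 4)) (θ : ℝ) : Set (Fin 4 → ℝ) :=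
  {v | (∑ i, v i) = 0 ∧
    (fun i => v (x.symm i)) + (fun i => v (x i)) = (2 * Real.cos θ) • v}

/-- membership in the closed dominant chamber of type `A₃`. -/
def Dom (e : Fin 4 → ℝ) : Prop := ∀ a b : Fin 4, a ≤ b → e b ≤ e a

/-- `e` is a `Φ`-regular point of the subset `S`: `e ∈ S` and every root
hyperplane `{v | v a = v b}` through `e` contains all of `S`. -/
def Reg (S : Set (Fin 4 → ℝ)) (e : Fin 4 → ℝ) : Prop :=
  e ∈ S ∧ ∀ a b : Fin 4, e a = e b → ∀ v ∈ S, v a = v b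

/-- good position with respect to the sequence `(θ₁, θ₂)`. -/
noncomputable def GoodPos2 (x : Equiv.Perm (Fin 4)) (θ₁ θ₂ : ℝ) : Prop :=
  (∃ e, Dom e ∧ Reg (Vth x θ₁) e) ∧
  (∃ e, Dom e ∧ Reg (Vth x θ₁ + Vth x θ₂) e)

lemma dom1 : Dom ![2, 1, -1, -2] := by
  intro a b hab
  fin_cases a <;> fin_cases b <;> first | exact absurd hab (by decide) | norm_num

lemma dom2 : Dom ![3, 1, -1, -3] := by
  intro a b hab
  fin_cases a <;> fin_cases b <;> first | exact absurd hab (by decide) | norm_num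

lemma inj1 : ∀ a b : Fin 4, (![2, 1, -1, -2] : Fin 4 → ℝ) a = ![2, 1, -1, -2] b → a = b := by
  intro a b h
  fin_cases a <;> fin_cases b <;> first | rfl | norm_num at h

lemma inj2 : ∀ a b : Fin 4, (![3, 1, -1, -3] : Fin 4 → ℝ) a = ![3, 1, -1, -3] b → a = b := by
  intro a b h
  fin_cases a <;> fin_cases b <;> first | rfl | norm_num at h

lemma vth_mem (θ : ℝ) (v : Fin 4 → ℝ) :
    v ∈ Vth (Equiv.swap 1 2 * Equiv.swap 0 1 * Equiv.swap 2 3) θ ↔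
      (v 0 + v 1 + v 2 + v 3 = 0 ∧
       v 1 + v 2 = 2 * Real.cos θ * v 0 ∧
       v 3 + v 0 = 2 * Real.cos θ * v 1 ∧
       v 0 + v 3 = 2 * Real.cos θ * v 2 ∧
       v 2 + v 1 = 2 * Real.cos θ * v 3) := by
  set x : Equiv.Perm (Fin 4) := Equiv.swap 1 2 * Equiv.swap 0 1 * Equiv.swap 2 3 with hxdef
  have hx0 : x 0 = 2 := by decide
  have hx1 : x 1 = 0 := by decide
  have hx2 : x 2 = 3 := by decide
  have hx3 : x 3 = 1 := by decide
  have hy0 : x.symm 0 = 1 := by decide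
  have hy1 : x.symm 1 = 3 := by decide
  have hy2 : x.symm 2 = 0 := by decide
  have hy3 : x.symm 3 = 2 := by decide
  constructor
  · rintro ⟨hs, hf⟩
    have h0 := congrFun hf 0
    have h1 := congrFun hf 1
    have h2 := congrFun hf 2
    have h3 := congrFun hf 3
    simp only [Pi.add_apply, Pi.smul_apply, smul_eq_mul, hx0, hx1, hx2, hx3,
      hy0, hy1, hy2, hy3] at h0 h1 h2 h3
    rw [Fin.sum_univ_four] at hs
    exact ⟨hs, h0, h1, h2, h3⟩
  · rintro ⟨hs, h0, h1, h2, h3⟩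
    refine ⟨by rw [Fin.sum_univ_four]; exact hs, funext fun i => ?_⟩
    fin_cases i <;>
      simp only [Pi.add_apply, Pi.smul_apply, smul_eq_mul, hx0, hx1, hx2, hx3,
        hy0, hy1, hy2, hy3] <;> assumption


/-- in type `A₃`, the element `x = s₂s₁s₃` satisfies
`V_x^π = {(a,−a,−a,a)}`, `V_x^{π/2} = {(a,b,−b,−a)}`,
`V = V_x^{π/2} ⊕ V_x^π`, and `x` is at good position with respect to
`(π/2, π)` but not with respect to `(π, π/2)`. -/
theorem a3_good_position :
    let x : Equiv.Perm (Fin 4) := Equiv.swap 1 2 * Equiv.swap 0 1 * Equiv.swap 2 3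
    (Vth x Real.pi = {v | ∃ a : ℝ, v = ![a, -a, -a, a]}) ∧
    (Vth x (Real.pi / 2) = {v | ∃ a b : ℝ, v = ![a, b, -b, -a]}) ∧
    (∀ v : Fin 4 → ℝ, (∑ i, v i) = 0 →
      ∃ u ∈ Vth x (Real.pi / 2), ∃ w ∈ Vth x Real.pi, v = u + w) ∧
    (∀ v ∈ Vth x (Real.pi / 2) ∩ Vth x Real.pi, v = 0) ∧
    GoodPos2 x (Real.pi / 2) Real.pi ∧
    ¬ GoodPos2 x Real.pi (Real.pi / 2) := by
  intro x
  have hmemP : ∀ v : Fin 4 → ℝ, v ∈ Vth x Real.pi ↔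
      (v 0 + v 1 + v 2 + v 3 = 0 ∧ v 1 + v 2 = -2 * v 0 ∧ v 3 + v 0 = -2 * v 1 ∧
       v 0 + v 3 = -2 * v 2 ∧ v 2 + v 1 = -2 * v 3) := by
    intro v
    have := vth_mem Real.pi v
    rw [Real.cos_pi] at this
    convert this using 3 <;> ring_nf
  have hmemH : ∀ v : Fin 4 → ℝ, v ∈ Vth x (Real.pi / 2) ↔
      (v 0 + v 1 + v 2 + v 3 = 0 ∧ v 1 + v 2 = 0 ∧ v 3 + v 0 = 0 ∧
       v 0 + v 3 = 0 ∧ v 2 + v 1 = 0) := by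
    intro v
    have := vth_mem (Real.pi / 2) v
    rw [Real.cos_pi_div_two] at this
    simpa using this
  have hPset : Vth x Real.pi = {v | ∃ a : ℝ, v = ![a, -a, -a, a]} := by
    ext v
    rw [hmemP]
    constructor
    · rintro ⟨hs, h0, h1, h2, h3⟩
      refine ⟨v 0, funext fun i => ?_⟩
      fin_cases i <;> simp <;> linarith
    · rintro ⟨a, rfl⟩
      refine ⟨?_, ?_, ?_, ?_, ?_⟩ <;> simp <;> ring
  have hHset : Vth x (Real.pi / 2) = {v | ∃ a b : ℝ, v = ![a, b, -b, -a]} := by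
    ext v
    rw [hmemH]
    constructor
    · rintro ⟨hs, h0, h1, h2, h3⟩
      refine ⟨v 0, v 1, funext fun i => ?_⟩
      fin_cases i <;> simp <;> linarith
    · rintro ⟨a, b, rfl⟩
      refine ⟨?_, ?_, ?_, ?_, ?_⟩ <;> simp <;> ring
  refine ⟨hPset, hHset, ?_, ?_, ?_, ?_⟩
  · intro v hs
    rw [Fin.sum_univ_four] at hs
    refine ⟨![(v 0 - v 3)/2, (v 1 - v 2)/2, -((v 1 - v 2)/2), -((v 0 - v 3)/2)],
      ?_, ![(v 0 + v 3)/2, -((v 0 + v 3)/2), -((v 0 + v 3)/2), (v 0 + v 3)/2], ?_, ?_⟩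
    · rw [hmemH]; refine ⟨?_, ?_, ?_, ?_, ?_⟩ <;> simp <;> ring
    · rw [hmemP]; refine ⟨?_, ?_, ?_, ?_, ?_⟩ <;> simp <;> ring
    · funext i; fin_cases i <;> simp <;> linarith
  · rintro v ⟨hH, hP⟩
    rw [hmemH] at hH
    rw [hmemP] at hP
    obtain ⟨-, a0, a1, a2, a3⟩ := hH
    obtain ⟨-, b0, b1, b2, b3⟩ := hP
    funext i; fin_cases i <;> simp <;> linarith
  · constructor
    · refine ⟨![2, 1, -1, -2], dom1, ?_, ?_⟩
      · rw [hmemH]; simp <;> norm_num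
      · intro a b hab w hw
        rw [inj1 a b hab]
    · refine ⟨![3, 1, -1, -3], dom2, ?_, ?_⟩
      · refine ⟨![3, 1, -1, -3], ?_, 0, ?_, by simp⟩
        · rw [hmemH]; simp <;> norm_num
        · rw [hmemP]; simp <;> norm_num
      · intro a b hab w hw
        rw [inj2 a b hab]
  · rintro ⟨⟨e, hdom, hmem, hreg⟩, -⟩
    rw [hPset] at hmem
    obtain ⟨a, rfl⟩ := hmem
    have h01 : (![a, -a, -a, a] : Fin 4 → ℝ) 1 ≤ ![a, -a, -a, a] 0 := hdom 0 1 (by decide)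
    have h23 : (![a, -a, -a, a] : Fin 4 → ℝ) 3 ≤ ![a, -a, -a, a] 2 := hdom 2 3 (by decide)
    simp at h01 h23
    have ha : a = 0 := le_antisymm h23 h01
    have hv : (![(1:ℝ), -1, -1, 1]) ∈ Vth x Real.pi := by
      rw [hPset]; exact ⟨1, rfl⟩
    have := hreg 0 1 (by simp [ha]) _ hv
    norm_num at this
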